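/- There exists a parameterized vector game G = (A,B,F) such that for all k_s,k_e ∈ ℕ, (k_s,k_e,0) ∈ Win(G) if and only if k_s ≥ k_e; consequently Win(G) has no cutoff with respect to (ℕ,ℕ,{0}). -/

import Mathlib

namespace PSyn

/-! ### Basic objects: types, alphabets, processes, events, executions -/

/-- The three process types: system, environment, mixed. -/
inductive PType where
  | s | e | se
deriving DecidableEq

/-- A finite alphabet: letters are the naturals `0, …, n-1`;
`sys a = true` means `a` is a system action (`a ∈ A_s`), otherwise `a ∈ A_e`. -/
structure Alphabet where
  n : ℕ
  sys : ℕ → Bool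

/-- An event is a pair (letter, process identity). -/
abbrev Event := ℕ × ℕ

/-- A process triple `P = (P_s, P_e, P_se)`: pairwise disjoint finite sets of processes. -/
structure ProcTriple where
  Ps : Finset ℕ
  Pe : Finset ℕ
  Pse : Finset ℕ
  disj_se : Disjoint Ps Pe
  disj_sse : Disjoint Ps Pse
  disj_ese : Disjoint Pe Pse

def ProcTriple.ofType (P : ProcTriple) : PType → Finset ℕ
  | .s => P.Ps
  | .e => P.Pe
  | .se => P.Pse

def ProcTriple.all (P : ProcTriple) : Finset ℕ := P.Ps ∪ P.Pe ∪ P.Pse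

/-- `σ ∈ Σ_s = A_s × (P_s ∪ P_se)`. -/
def isSysEvent (Alph : Alphabet) (P : ProcTriple) (σ : Event) : Prop :=
  σ.1 < Alph.n ∧ Alph.sys σ.1 = true ∧ (σ.2 ∈ P.Ps ∨ σ.2 ∈ P.Pse)

/-- `σ ∈ Σ_e = A_e × (P_e ∪ P_se)`. -/
def isEnvEvent (Alph : Alphabet) (P : ProcTriple) (σ : Event) : Prop :=
  σ.1 < Alph.n ∧ Alph.sys σ.1 = false ∧ (σ.2 ∈ P.Pe ∨ σ.2 ∈ P.Pse)

def isEvent (Alph : Alphabet) (P : ProcTriple) (σ : Event) : Prop :=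
  isSysEvent Alph P σ ∨ isEnvEvent Alph P σ

/-- A finite or infinite word over events. -/
inductive Exec where
  | fin : List Event → Exec
  | inf : (ℕ → Event) → Exec

/-- A `P`-execution: every event is an event of `P` over the alphabet. -/
def Exec.valid (Alph : Alphabet) (P : ProcTriple) : Exec → Prop
  | .fin l => ∀ σ ∈ l, isEvent Alph P σ
  | .inf g => ∀ i, isEvent Alph P (g i)

def Exec.at? : Exec → ℕ → Option Event
  | .fin l, i => l[i]?
  | .inf g, i => some (g i)

/-- The set of positions of an execution. -/
def Exec.posDom : Exec → ℕ → Prop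
  | .fin l, i => i < l.length
  | .inf _, _ => True

/-- Elements of the structure associated with `(P, w)`:
`inl p` is a process, `inr i` is a position. -/
abbrev Elem := ℕ ⊕ ℕ

/-- The universe `P ⊎ Pos(w)`. -/
def elemDom (P : ProcTriple) (w : Exec) : Elem → Prop
  | .inl p => p ∈ P.all
  | .inr i => w.posDom i

/-- The process an element belongs to (a process belongs to itself; a position
to the process executing it).  Two elements are `∼`-equivalent iff they have
the same process. -/
def procOf (w : Exec) : Elem → Option ℕ
  | .inl p => some p
  | .inr i => (w.at? i).map Prod.snd

def letterOf (w : Exec) : Elem → Option ℕ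
  | .inl _ => none
  | .inr i => (w.at? i).map Prod.fst

/-! ### First-order logic FO_A[∼,<,+1] -/

/-- Syntax of `FO_A[∼,<,+1]`; variables are naturals, letters are naturals. -/
inductive FO where
  | ptype : PType → ℕ → FO
  | letter : ℕ → ℕ → FO
  | eq : ℕ → ℕ → FO
  | sim : ℕ → ℕ → FO
  | lt : ℕ → ℕ → FO
  | succ : ℕ → ℕ → FO
  | not : FO → FO
  | or : FO → FO → FO
  | ex : ℕ → FO → FO

/-- Satisfaction of a formula in the structure `S_(P,w)` under a valuation. -/
def Sat (P : ProcTriple) (w : Exec) : (ℕ → Elem) → FO → Prop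
  | v, .ptype θ x => ∃ p, v x = Sum.inl p ∧ p ∈ P.ofType θ
  | v, .letter a x => letterOf w (v x) = some a
  | v, .eq x y => v x = v y
  | v, .sim x y => (procOf w (v x)).isSome ∧ procOf w (v x) = procOf w (v y)
  | v, .lt x y => ∃ i j, v x = Sum.inr i ∧ v y = Sum.inr j ∧ i < j ∧ w.posDom j
  | v, .succ x y => ∃ i, v x = Sum.inr i ∧ v y = Sum.inr (i + 1) ∧ w.posDom (i + 1)
  | v, .not φ => ¬ Sat P w v φ
  | v, .or φ ψ => Sat P w v φ ∨ Sat P w v ψ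
  | v, .ex x φ => ∃ u : Elem, elemDom P w u ∧ Sat P w (Function.update v x u) φ

/-- Satisfaction for sentences: `(P,w) ⊨ φ` (the valuation is irrelevant for sentences). -/
def SatS (P : ProcTriple) (w : Exec) (φ : FO) : Prop :=
  Sat P w (fun _ => Sum.inl 0) φ

def FO.free : FO → Finset ℕ
  | .ptype _ x => {x}
  | .letter _ x => {x}
  | .eq x y => {x, y}
  | .sim x y => {x, y}
  | .lt x y => {x, y}
  | .succ x y => {x, y}
  | .not φ => φ.free
  | .or φ ψ => φ.free ∪ ψ.free
  | .ex x φ => φ.free.erase x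

/-- A sentence has no free variables. -/
def FO.isSentence (φ : FO) : Prop := φ.free = ∅

def FO.vars : FO → Finset ℕ
  | .ptype _ x => {x}
  | .letter _ x => {x}
  | .eq x y => {x, y}
  | .sim x y => {x, y}
  | .lt x y => {x, y}
  | .succ x y => {x, y}
  | .not φ => φ.vars
  | .or φ ψ => φ.vars ∪ ψ.vars
  | .ex x φ => insert x φ.vars

/-- The two-variable fragment: only the variable names `0` and `1` are used. -/
def FO.twoVar (φ : FO) : Prop := φ.vars ⊆ ({0, 1} : Finset ℕ)

/-- The fragment `FO_A[∼]`: neither `<` nor `+1` occurs. -/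
def FO.onlySim : FO → Prop
  | .lt _ _ => False
  | .succ _ _ => False
  | .not φ => φ.onlySim
  | .or φ ψ => φ.onlySim ∧ ψ.onlySim
  | .ex _ φ => φ.onlySim
  | _ => True

/-! ### The asynchronous synthesis game and `Win(φ)` -/

/-- A `P`-strategy for System: `none` plays ε, `some σ` proposes the system event `σ`. -/
abbrev Strategy := List Event → Option Event

/-- The strategy only proposes system events (its codomain is `Σ_s ∪ {ε}`). -/
def properStrategy (Alph : Alphabet) (P : ProcTriple) (f : Strategy) : Prop :=
  ∀ u σ, f u = some σ → isSysEvent Alph P σ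

/-- The prefix of length `i` of an execution. -/
def Exec.pre : Exec → ℕ → List Event
  | .fin l, i => l.take i
  | .inf g, i => (List.range i).map g

/-- `w` is `f`-compatible: every system event of `w` is the one proposed by `f`. -/
def compatible (Alph : Alphabet) (P : ProcTriple) (f : Strategy) (w : Exec) : Prop :=
  ∀ i σ, w.at? i = some σ → isSysEvent Alph P σ → f (w.pre i) = some σ

/-- `w` is `f`-fair. -/
def fair (Alph : Alphabet) (P : ProcTriple) (f : Strategy) : Exec → Prop
  | .fin l => f l = none
  | .inf g =>
      {i : ℕ | f (Exec.pre (Exec.inf g) i) ≠ none}.Infinite →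
      {j : ℕ | isSysEvent Alph P (g j)}.Infinite

/-- `f` is `P`-winning for `φ`. -/
def winningStrategy (Alph : Alphabet) (P : ProcTriple) (φ : FO) (f : Strategy) : Prop :=
  properStrategy Alph P f ∧
  ∀ w : Exec, w.valid Alph P → compatible Alph P f w → fair Alph P f w → SatS P w φ

/-- Triples of naturals, indexed by the process types (s, e, se). -/
abbrev Tok := ℕ × ℕ × ℕ

/-- `Win(φ)`: the set of triples `(k_s, k_e, k_se)` admitting a winning System strategy. -/
def WinFO (Alph : Alphabet) (φ : FO) : Set Tok :=
  { k | ∃ P : ProcTriple,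
      P.Ps.card = k.1 ∧ P.Pe.card = k.2.1 ∧ P.Pse.card = k.2.2 ∧
      ∃ f : Strategy, winningStrategy Alph P φ f }

/-! ### Parameterized vector games -/

/-- Locations: `L = {0,…,B}^A`. -/
abbrev Loc (n B : ℕ) := Fin n → Fin (B + 1)

/-- A local acceptance condition: for each process type a pair `(⋈, n)`,
where the Boolean `true` stands for `=` and `false` for `≥`. -/
abbrev LCond := (Bool × ℕ) × (Bool × ℕ) × (Bool × ℕ)

/-- Configurations: `C : L → ℕ^T`. -/
abbrev GConfig (n B : ℕ) := Loc n B → Tok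

/-- Transitions: maps `L × L → ℕ^T`. -/
abbrev GTrans (n B : ℕ) := Loc n B → Loc n B → Tok

/-- A parameterized vector game `G = (A, B, F)`. -/
structure PVG where
  Alph : Alphabet
  B : ℕ
  F : List (Loc Alph.n B → LCond)

def cmpHolds (c : Bool × ℕ) (m : ℕ) : Prop := if c.1 then m = c.2 else c.2 ≤ m

def lcondHolds (κ : LCond) (t : Tok) : Prop :=
  cmpHolds κ.1 t.1 ∧ cmpHolds κ.2.1 t.2.1 ∧ cmpHolds κ.2.2 t.2.2

/-- `C ⊨ F`. -/
def accept (G : PVG) (C : GConfig G.Alph.n G.B) : Prop :=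
  ∃ κ ∈ G.F, ∀ ℓ, lcondHolds (κ ℓ) (C ℓ)

/-- `ℓ + a`: increase coordinate `a` by one, capped at `B`. -/
def locAdd {n B : ℕ} (ℓ : Loc n B) (a : ℕ) : Loc n B :=
  fun i =>
    if (i : ℕ) = a then ⟨min ((ℓ i : ℕ) + 1) B, Nat.lt_succ_of_le (min_le_right _ _)⟩
    else ℓ i

/-- `ℓ + w` for a finite word `w` over the alphabet. -/
def locAddW {n B : ℕ} (ℓ : Loc n B) : List ℕ → Loc n B
  | [] => ℓ
  | a :: u => locAddW (locAdd ℓ a) u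

def isSysWord (Alph : Alphabet) (u : List ℕ) : Prop :=
  ∀ a ∈ u, a < Alph.n ∧ Alph.sys a = true

def isEnvWord (Alph : Alphabet) (u : List ℕ) : Prop :=
  ∀ a ∈ u, a < Alph.n ∧ Alph.sys a = false

/-- System transitions: values in `ℕ × {0} × ℕ` and moves along system words. -/
def isSysTrans (G : PVG) (τ : GTrans G.Alph.n G.B) : Prop :=
  ∀ ℓ ℓ', (τ ℓ ℓ').2.1 = 0 ∧
    (τ ℓ ℓ' ≠ ((0, 0, 0) : Tok) → ∃ u : List ℕ, isSysWord G.Alph u ∧ ℓ' = locAddW ℓ u)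

/-- Environment transitions: values in `{0} × ℕ × ℕ` and moves along environment words. -/
def isEnvTrans (G : PVG) (τ : GTrans G.Alph.n G.B) : Prop :=
  ∀ ℓ ℓ', (τ ℓ ℓ').1 = 0 ∧
    (τ ℓ ℓ' ≠ ((0, 0, 0) : Tok) → ∃ u : List ℕ, isEnvWord G.Alph u ∧ ℓ' = locAddW ℓ u)

def outm {n B : ℕ} (τ : GTrans n B) (ℓ : Loc n B) : Tok := ∑ ℓ' : Loc n B, τ ℓ ℓ'

def inm {n B : ℕ} (τ : GTrans n B) (ℓ : Loc n B) : Tok := ∑ ℓ' : Loc n B, τ ℓ' ℓ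

/-- Componentwise order on `ℕ^T`. -/
def tokLe (s t : Tok) : Prop := s.1 ≤ t.1 ∧ s.2.1 ≤ t.2.1 ∧ s.2.2 ≤ t.2.2

def applicable {n B : ℕ} (τ : GTrans n B) (C : GConfig n B) : Prop :=
  ∀ ℓ, tokLe (outm τ ℓ) (C ℓ)

/-- `τ(C)(ℓ) = C(ℓ) − out_τ(ℓ) + in_τ(ℓ)` (componentwise). -/
def applyT {n B : ℕ} (τ : GTrans n B) (C : GConfig n B) : GConfig n B :=
  fun ℓ => C ℓ - outm τ ℓ + inm τ ℓ

/-- The configuration reached from `C0` after applying the transitions `ts` in order. -/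
def confAt {n B : ℕ} (C0 : GConfig n B) (ts : List (GTrans n B)) : GConfig n B :=
  ts.foldl (fun C τ => applyT τ C) C0

/-- A valid `C0`-play, represented by its list of transitions
(step `i`, 0-based, is System's if `i` is even, Environment's if `i` is odd). -/
def validPlay (G : PVG) (C0 : GConfig G.Alph.n G.B)
    (ts : List (GTrans G.Alph.n G.B)) : Prop :=
  ∀ i (h : i < ts.length),
    applicable (ts.get ⟨i, h⟩) (confAt C0 (ts.take i)) ∧
    (i % 2 = 0 → isSysTrans G (ts.get ⟨i, h⟩) ∧ accept G (confAt C0 (ts.take (i + 1)))) ∧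
    (i % 2 = 1 → isEnvTrans G (ts.get ⟨i, h⟩) ∧ ¬ accept G (confAt C0 (ts.take (i + 1))))

/-- A strategy for System in the game: a partial map from plays to transitions. -/
abbrev GStrat (n B : ℕ) := List (GTrans n B) → Option (GTrans n B)

/-- `f(C)` is defined, and whenever `f(π) = τ` for a valid play π ending in `C_i`,
`τ` is a system transition, applicable at `C_i`, and `τ(C_i) ⊨ F`. -/
def properGStrat (G : PVG) (C0 : GConfig G.Alph.n G.B) (f : GStrat G.Alph.n G.B) : Prop :=
  (f []).isSome ∧
  ∀ ts τ, validPlay G C0 ts → f ts = some τ →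
    isSysTrans G τ ∧ applicable τ (confAt C0 ts) ∧ accept G (applyT τ (confAt C0 ts))

def gCompatible {n B : ℕ} (f : GStrat n B) (ts : List (GTrans n B)) : Prop :=
  ∀ i (h : i < ts.length), i % 2 = 0 → f (ts.take i) = some (ts.get ⟨i, h⟩)

def gMaximal (G : PVG) (C0 : GConfig G.Alph.n G.B) (f : GStrat G.Alph.n G.B)
    (ts : List (GTrans G.Alph.n G.B)) : Prop :=
  ¬ ∃ ts', ts <+: ts' ∧ ts ≠ ts' ∧ validPlay G C0 ts' ∧ gCompatible f ts'

def winningGStrat (G : PVG) (C0 : GConfig G.Alph.n G.B) (f : GStrat G.Alph.n G.B) : Prop :=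
  properGStrat G C0 f ∧
  ∀ ts, validPlay G C0 ts → gCompatible f ts → gMaximal G C0 f ts →
    accept G (confAt C0 ts)

/-- A configuration is winning for System if System has a winning strategy from it. -/
def winningConf (G : PVG) (C0 : GConfig G.Alph.n G.B) : Prop :=
  ∃ f, winningGStrat G C0 f

/-- The all-zero location `ℓ_0`. -/
def loc0 (n B : ℕ) : Loc n B := fun _ => 0

/-- `C_k⃗`: all `k⃗` tokens on `ℓ_0`. -/
def initConfig {n B : ℕ} (k : Tok) : GConfig n B :=
  Function.update (fun _ => ((0, 0, 0) : Tok)) (loc0 n B) k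

/-- `Win(G)`. -/
def WinG (G : PVG) : Set Tok :=
  { k | winningConf G (initConfig k) }

/-! ### Environment chains and constants of a game -/

/-- `C <_e C'`. -/
def envStep (G : PVG) (C C' : GConfig G.Alph.n G.B) : Prop :=
  C ≠ C' ∧ ∃ τ, isEnvTrans G τ ∧ applicable τ C ∧ C' = applyT τ C

/-- There is a chain `C = C_0 <_e C_1 <_e … <_e C_d`. -/
def hasChain (G : PVG) (C : GConfig G.Alph.n G.B) (d : ℕ) : Prop :=
  ∃ cs : ℕ → GConfig G.Alph.n G.B, cs 0 = C ∧ ∀ i < d, envStep G (cs i) (cs (i + 1))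

/-- `C ∈ Conf_d`: the longest `<_e`-chain starting in `C` has length exactly `d`. -/
def ConfD (G : PVG) (C : GConfig G.Alph.n G.B) (d : ℕ) : Prop :=
  hasChain G C d ∧ ¬ hasChain G C (d + 1)

def lcondMax (κ : LCond) : ℕ := max κ.1.2 (max κ.2.1.2 κ.2.2.2)

/-- `K`: the largest constant occurring in the acceptance condition `F`. -/
def maxConst (G : PVG) : ℕ :=
  (G.F.map fun κ => Finset.univ.sup fun ℓ : Loc G.Alph.n G.B => lcondMax (κ ℓ)).foldr max 0

/-- `|A_e|`: the number of environment letters. -/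
def envCard (Alph : Alphabet) : ℕ :=
  ((Finset.range Alph.n).filter fun a => Alph.sys a = false).card

/-- `|L| = (B+1)^|A|`. -/
def numLoc (G : PVG) : ℕ := (G.B + 1) ^ G.Alph.n

/-! ### Cutoffs -/

/-- `k⃗_0` is a cutoff of `W` with respect to `(N_s, N_e, N_se)`. -/
def IsCutoff (Ns Ne Nse : Set ℕ) (W : Set Tok) (k0 : Tok) : Prop :=
  k0.1 ∈ Ns ∧ k0.2.1 ∈ Ne ∧ k0.2.2 ∈ Nse ∧
  ((∀ k : Tok, k.1 ∈ Ns → k.2.1 ∈ Ne → k.2.2 ∈ Nse →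
      k0.1 ≤ k.1 → k0.2.1 ≤ k.2.1 → k0.2.2 ≤ k.2.2 → k ∈ W) ∨
   (∀ k : Tok, k.1 ∈ Ns → k.2.1 ∈ Ne → k.2.2 ∈ Nse →
      k0.1 ≤ k.1 → k0.2.1 ≤ k.2.1 → k0.2.2 ≤ k.2.2 → k ∉ W))

/-! ### Counting formulas and the normal form for FO[∼] -/

def FO.and (φ ψ : FO) : FO := FO.not (FO.or (FO.not φ) (FO.not ψ))

def FO.imp (φ ψ : FO) : FO := FO.or (FO.not φ) ψ

def FO.iff (φ ψ : FO) : FO := FO.and (φ.imp ψ) (ψ.imp φ)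

def FO.all (x : ℕ) (φ : FO) : FO := FO.not (FO.ex x (FO.not φ))

def trueFO : FO := FO.eq 0 0

def bigAnd (l : List FO) : FO := l.foldr FO.and trueFO

def bigOr (l : List FO) : FO := l.foldr FO.or (FO.not trueFO)

/-- `∃^{≥m} y. (mk y)`: there are at least `m` distinct witnesses; the witness
variables are `base, base+1, …, base+m-1`. -/
def exGe (m base : ℕ) (mk : ℕ → FO) : FO :=
  let distinct : List FO :=
    (List.range m).flatMap fun i =>
      ((List.range m).filter fun j => decide (i < j)).map fun j =>
        FO.not (FO.eq (base + i) (base + j))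
  let body : FO :=
    FO.and (bigAnd distinct) (bigAnd ((List.range m).map fun i => mk (base + i)))
  ((List.range m).map (base + ·)).foldr FO.ex body

/-- `∃^{=m} y. (mk y) := ∃^{≥m} y. (mk y) ∧ ¬ ∃^{≥m+1} y. (mk y)`. -/
def exEq (m base : ℕ) (mk : ℕ → FO) : FO :=
  FO.and (exGe m base mk) (FO.not (exGe (m + 1) base mk))

/-- `ψ_{B,ℓ}(y)`: in the class of `y`, each letter `a` occurs exactly `ℓ(a)` times
if `ℓ(a) < B`, and at least `ℓ(a)` times if `ℓ(a) = B`. -/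
def psiCount (n B : ℕ) (ℓ : ℕ → ℕ) (y : ℕ) : FO :=
  bigAnd ((List.range n).map fun a =>
    if ℓ a < B then
      exEq (ℓ a) (y + 1) (fun z => FO.and (FO.sim y z) (FO.letter a z))
    else
      exGe (ℓ a) (y + 1) (fun z => FO.and (FO.sim y z) (FO.letter a z)))

/-- `∃^{⋈m} y. (θ(y) ∧ ψ_{B,ℓ}(y))`, where `⋈` is `=` if `isEq` and `≥` otherwise. -/
def nfAtom (n B : ℕ) (isEq : Bool) (m : ℕ) (θ : PType) (ℓ : ℕ → ℕ) : FO :=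
  let mk : ℕ → FO := fun y => FO.and (FO.ptype θ y) (psiCount n B ℓ y)
  if isEq then exEq m 0 mk else exGe m 0 mk

/-! ### The normalized synthesis problem -/

/-- A normalized strategy: maps finite executions to finite system words. -/
abbrev NormStrategy := List Event → Option (List Event)

/-- A normalized `P`-execution, given by its block decomposition `bs`
(`bs[j]` with `j` even is a System block, `j` odd an Environment block;
this corresponds to the 1-based indexing `w = w_1 … w_n` of the paper). -/
def NormExec (Alph : Alphabet) (P : ProcTriple) (φ : FO) (bs : List (List Event)) : Prop :=
  1 ≤ bs.length ∧
  ∀ j (h : j < bs.length),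
    (j % 2 = 0 → (∀ σ ∈ bs.get ⟨j, h⟩, isSysEvent Alph P σ) ∧
        SatS P (Exec.fin ((bs.take (j + 1)).flatten)) φ) ∧
    (j % 2 = 1 → (∀ σ ∈ bs.get ⟨j, h⟩, isEnvEvent Alph P σ) ∧
        ¬ SatS P (Exec.fin ((bs.take (j + 1)).flatten)) φ)

/-- Properness of a normalized strategy: `f(ε)` is defined, outputs are system
words, and `(P, w · f(w)) ⊨ φ` whenever `f(w)` is defined. -/
def properNStrat (Alph : Alphabet) (P : ProcTriple) (φ : FO) (f : NormStrategy) : Prop :=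
  (f []).isSome ∧
  ∀ w u, f w = some u →
    (∀ σ ∈ u, isSysEvent Alph P σ) ∧ SatS P (Exec.fin (w ++ u)) φ

def nCompatible (f : NormStrategy) (bs : List (List Event)) : Prop :=
  ∀ j (h : j < bs.length), j % 2 = 0 → f ((bs.take j).flatten) = some (bs.get ⟨j, h⟩)

def nMaximal (Alph : Alphabet) (P : ProcTriple) (φ : FO) (f : NormStrategy)
    (bs : List (List Event)) : Prop :=
  ¬ ∃ bs', bs <+: bs' ∧ bs ≠ bs' ∧ NormExec Alph P φ bs' ∧ nCompatible f bs'

def winningNStrategy (Alph : Alphabet) (P : ProcTriple) (φ : FO) (f : NormStrategy) : Prop :=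
  properNStrat Alph P φ f ∧
  ∀ bs, NormExec Alph P φ bs → nCompatible f bs → nMaximal Alph P φ f bs →
    SatS P (Exec.fin bs.flatten) φ

/-- `NWin(φ)`. -/
def NWin (Alph : Alphabet) (φ : FO) : Set Tok :=
  { k | ∃ P : ProcTriple,
      P.Ps.card = k.1 ∧ P.Pe.card = k.2.1 ∧ P.Pse.card = k.2.2 ∧
      ∃ f : NormStrategy, winningNStrategy Alph P φ f }

/-! ### Concrete alphabet and formulas of the examples -/

/-- The alphabet with `A_s = {a, b} = {0, 1}` and `A_e = {c, d} = {2, 3}`. -/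
def alph4 : Alphabet := ⟨4, fun a => decide (a < 2)⟩

/-- `φ_1 = ∀x.((s(x) ∨ se(x)) → ∃y.(x∼y ∧ (a(y) ∨ b(y))))`. -/
def phi1 : FO :=
  FO.all 0 (FO.imp (FO.or (FO.ptype .s 0) (FO.ptype .se 0))
    (FO.ex 1 (FO.and (FO.sim 0 1) (FO.or (FO.letter 0 1) (FO.letter 1 1)))))

/-- `φ_4 = ∀x.((∃^{=2}y.(x∼y ∧ a(y))) ↔ (∃^{=2}y.(x∼y ∧ d(y))))`. -/
def phi4 : FO :=
  FO.all 0 (FO.iff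
    (exEq 2 1 fun y => FO.and (FO.sim 0 y) (FO.letter 0 y))
    (exEq 2 1 fun y => FO.and (FO.sim 0 y) (FO.letter 3 y)))

/-- Vectors `{0,…,3}^{4}` as functions `ℕ → ℕ`. -/
def vec4 (v0 v1 v2 v3 : ℕ) : ℕ → ℕ := fun i => [v0, v1, v2, v3].getD i 0

def allVecs4 : List (ℕ → ℕ) :=
  (List.range 4).flatMap fun v0 =>
    (List.range 4).flatMap fun v1 =>
      (List.range 4).flatMap fun v2 =>
        (List.range 4).map fun v3 => vec4 v0 v1 v2 v3

/-- `Z`: vectors with `ℓ(a) = 2 ≠ ℓ(d)` or `ℓ(d) = 2 ≠ ℓ(a)` (letters `a = 0`, `d = 3`). -/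
def Zvecs : List (ℕ → ℕ) :=
  allVecs4.filter fun ℓ => decide ((ℓ 0 = 2 ∧ ℓ 3 ≠ 2) ∨ (ℓ 3 = 2 ∧ ℓ 0 ≠ 2))

/-- `φ_4' = ⋀_{θ ∈ T, ℓ ∈ Z} ∃^{=0} y.(θ(y) ∧ ψ_{3,ℓ}(y))`. -/
def phi4' : FO :=
  bigAnd (([PType.s, PType.e, PType.se].flatMap fun θ =>
    Zvecs.map fun ℓ => nfAtom 4 3 true 0 θ ℓ))

/-! ### Effective encodings of inputs (for decidability statements) -/

def decodePType (k : ℕ) : PType :=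
  if k % 3 = 0 then .s else if k % 3 = 1 then .e else .se

/-- Surjective decoding of formulas from naturals (with fuel). -/
def decodeFOAux : ℕ → ℕ → FO
  | 0, _ => FO.eq 0 0
  | fuel + 1, c =>
    let t := c % 9
    let m := c / 9
    let a := m.unpair.1
    let b := m.unpair.2
    if t = 0 then FO.ptype (decodePType a) b
    else if t = 1 then FO.letter a b
    else if t = 2 then FO.eq a b
    else if t = 3 then FO.sim a b
    else if t = 4 then FO.lt a b
    else if t = 5 then FO.succ a b
    else if t = 6 then FO.not (decodeFOAux fuel m)
    else if t = 7 then FO.or (decodeFOAux fuel a) (decodeFOAux fuel b)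
    else FO.ex a (decodeFOAux fuel b)

def decodeFO (c : ℕ) : FO := decodeFOAux c c

/-- Decoding an input of the synthesis/satisfiability problems: an alphabet
(size and partition) together with a formula. -/
def decodeFOInput (c : ℕ) : Alphabet × FO :=
  (⟨c.unpair.1.unpair.1, fun a => (c.unpair.1.unpair.2).testBit a⟩, decodeFO c.unpair.2)

def decodeBN (m : ℕ) : Bool × ℕ := (decide (m % 2 = 0), m / 2)

def decodeLCond (m : ℕ) : LCond :=
  (decodeBN m.unpair.1, decodeBN m.unpair.2.unpair.1, decodeBN m.unpair.2.unpair.2)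

/-- An explicit index of a location, used to decode local acceptance conditions. -/
def locIndex {n B : ℕ} (ℓ : Loc n B) : ℕ := ∑ i : Fin n, (ℓ i : ℕ) * (B + 1) ^ (i : ℕ)

/-- Decoding a parameterized vector game from a natural number. -/
def decodeGame (c : ℕ) : PVG :=
  let n := c.unpair.1.unpair.1
  let sy := c.unpair.1.unpair.2
  let B := c.unpair.2.unpair.1
  let Fc := c.unpair.2.unpair.2
  { Alph := ⟨n, fun a => sy.testBit a⟩
    B := B
    F := (Denumerable.ofNat (List ℕ) Fc).map fun kc =>
      fun ℓ => decodeLCond ((Denumerable.ofNat (List ℕ) kc).getD (locIndex ℓ) 0) }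


/-! ### Construction for Statement 7 -/

namespace NC

/-- Alphabet: letter 0 is a system letter, letter 1 an environment letter. -/
abbrev myA : Alphabet := ⟨2, fun a => decide (a = 0)⟩

abbrev L2 := Loc 2 2
abbrev Cfg := GConfig 2 2
abbrev Tr := GTrans 2 2

def l0 : L2 := loc0 2 2
def lA : L2 := ![1, 0]
def lAA : L2 := ![2, 0]
def lC : L2 := ![0, 1]
def lCC : L2 := ![0, 2]

def sAt (C : Cfg) (ℓ : L2) : ℕ := (C ℓ).1
def eAt (C : Cfg) (ℓ : L2) : ℕ := (C ℓ).2.1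

def trivC : LCond := ((false, 0), (false, 0), (false, 0))

def K1 : L2 → LCond := fun ℓ =>
  if ℓ = lC then ((false, 0), (true, 0), (false, 0))
  else if ℓ = lA then ((true, 0), (false, 0), (false, 0)) else trivC

def K2 : L2 → LCond := fun ℓ =>
  if ℓ = lC then ((false, 0), (false, 1), (false, 0))
  else if ℓ = lA then ((false, 1), (false, 0), (false, 0)) else trivC

/-- The game witnessing Statement 7. -/
abbrev Gm : PVG := ⟨myA, 2, [K1, K2]⟩

lemma accept_iff (C : Cfg) :
    accept Gm C ↔ (eAt C lC = 0 ∧ sAt C lA = 0) ∨ (1 ≤ eAt C lC ∧ 1 ≤ sAt C lA) := by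
  constructor
  · rintro ⟨κ, hκ, h⟩
    have hκ' : κ = K1 ∨ κ = K2 := by simpa [Gm] using hκ
    rcases hκ' with rfl | rfl
    · left
      have h1 := h lC
      have h2 := h lA
      rw [K1, if_pos rfl] at h1
      rw [K1, if_neg (by decide : lA ≠ lC), if_pos rfl] at h2
      exact ⟨h1.2.1, h2.1⟩
    · right
      have h1 := h lC
      have h2 := h lA
      rw [K2, if_pos rfl] at h1
      rw [K2, if_neg (by decide : lA ≠ lC), if_pos rfl] at h2
      exact ⟨h1.2.1, h2.1⟩
  · rintro (⟨h1, h2⟩ | ⟨h1, h2⟩)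
    · refine ⟨K1, by simp [Gm], fun ℓ => ?_⟩
      rw [K1]
      split_ifs with hc ha
      · subst hc; exact ⟨Nat.zero_le _, h1, Nat.zero_le _⟩
      · subst ha; exact ⟨h2, Nat.zero_le _, Nat.zero_le _⟩
      · exact ⟨Nat.zero_le _, Nat.zero_le _, Nat.zero_le _⟩
    · refine ⟨K2, by simp [Gm], fun ℓ => ?_⟩
      rw [K2]
      split_ifs with hc ha
      · subst hc; exact ⟨Nat.zero_le _, h1, Nat.zero_le _⟩
      · subst ha; exact ⟨h2, Nat.zero_le _, Nat.zero_le _⟩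
      · exact ⟨Nat.zero_le _, Nat.zero_le _, Nat.zero_le _⟩

/-! #### Component computations for `applyT` -/

lemma outm_fst (τ : Tr) (ℓ : L2) : (outm τ ℓ).1 = ∑ ℓ', (τ ℓ ℓ').1 := by
  rw [outm, Prod.fst_sum]

lemma outm_e (τ : Tr) (ℓ : L2) : (outm τ ℓ).2.1 = ∑ ℓ', (τ ℓ ℓ').2.1 := by
  rw [outm, Prod.snd_sum, Prod.fst_sum]

lemma inm_fst (τ : Tr) (ℓ : L2) : (inm τ ℓ).1 = ∑ ℓ', (τ ℓ' ℓ).1 := by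
  rw [inm, Prod.fst_sum]

lemma inm_e (τ : Tr) (ℓ : L2) : (inm τ ℓ).2.1 = ∑ ℓ', (τ ℓ' ℓ).2.1 := by
  rw [inm, Prod.snd_sum, Prod.fst_sum]

lemma applyT_fst (τ : Tr) (C : Cfg) (ℓ : L2) :
    sAt (applyT τ C) ℓ = sAt C ℓ - (outm τ ℓ).1 + (inm τ ℓ).1 := rfl

lemma applyT_e (τ : Tr) (C : Cfg) (ℓ : L2) :
    eAt (applyT τ C) ℓ = eAt C ℓ - (outm τ ℓ).2.1 + (inm τ ℓ).2.1 := rfl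

lemma single_le_out_s (τ : Tr) (ℓ ℓ' : L2) : (τ ℓ ℓ').1 ≤ (outm τ ℓ).1 := by
  rw [outm_fst]
  exact Finset.single_le_sum (f := fun ℓ' => (τ ℓ ℓ').1) (fun i _ => Nat.zero_le _)
    (Finset.mem_univ ℓ')

lemma single_le_out_e (τ : Tr) (ℓ ℓ' : L2) : (τ ℓ ℓ').2.1 ≤ (outm τ ℓ).2.1 := by
  rw [outm_e]
  exact Finset.single_le_sum (f := fun ℓ' => (τ ℓ ℓ').2.1) (fun i _ => Nat.zero_le _)
    (Finset.mem_univ ℓ')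

lemma pair_le_out_s (τ : Tr) : (τ l0 l0).1 + (τ l0 lA).1 ≤ (outm τ l0).1 := by
  rw [outm_fst]
  have h := Finset.sum_le_sum_of_subset (f := fun ℓ' => (τ l0 ℓ').1)
    (Finset.subset_univ ({l0, lA} : Finset L2))
  rwa [Finset.sum_pair (by decide : l0 ≠ lA)] at h

lemma pair_le_out_e (τ : Tr) : (τ l0 l0).2.1 + (τ l0 lC).2.1 ≤ (outm τ l0).2.1 := by
  rw [outm_e]
  have h := Finset.sum_le_sum_of_subset (f := fun ℓ' => (τ l0 ℓ').2.1)
    (Finset.subset_univ ({l0, lC} : Finset L2))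
  rwa [Finset.sum_pair (by decide : l0 ≠ lC)] at h

/-! #### System transitions do not move e-tokens, environment transitions no s-tokens -/

lemma sys_apply_e {τ : Tr} (hτ : isSysTrans Gm τ) (C : Cfg) (ℓ : L2) :
    eAt (applyT τ C) ℓ = eAt C ℓ := by
  rw [applyT_e]
  have h1 : (outm τ ℓ).2.1 = 0 := by
    rw [outm_e]; exact Finset.sum_eq_zero fun ℓ' _ => (hτ ℓ ℓ').1
  have h2 : (inm τ ℓ).2.1 = 0 := by
    rw [inm_e]; exact Finset.sum_eq_zero fun ℓ' _ => (hτ ℓ' ℓ).1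
  omega

lemma env_apply_s {τ : Tr} (hτ : isEnvTrans Gm τ) (C : Cfg) (ℓ : L2) :
    sAt (applyT τ C) ℓ = sAt C ℓ := by
  rw [applyT_fst]
  have h1 : (outm τ ℓ).1 = 0 := by
    rw [outm_fst]; exact Finset.sum_eq_zero fun ℓ' _ => (hτ ℓ ℓ').1
  have h2 : (inm τ ℓ).1 = 0 := by
    rw [inm_fst]; exact Finset.sum_eq_zero fun ℓ' _ => (hτ ℓ' ℓ).1
  omega

/-! #### Reachability along words -/

lemma locAdd_coord (ℓ : L2) (a : ℕ) (i : Fin 2) :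
    ((ℓ i : ℕ) ≤ locAdd ℓ a i) ∧ ((i : ℕ) ≠ a → locAdd ℓ a i = ℓ i) := by
  constructor
  · rw [locAdd]
    split
    · simp only []
      have := (ℓ i).is_lt
      omega
    · exact le_rfl
  · intro h; rw [locAdd, if_neg h]

lemma locAddW_env {u : List ℕ} (hu : isEnvWord myA u) (ℓ : L2) :
    locAddW ℓ u 0 = ℓ 0 ∧ (ℓ 1 : ℕ) ≤ locAddW ℓ u 1 := by
  induction u generalizing ℓ with
  | nil => exact ⟨rfl, le_rfl⟩
  | cons a u ih =>
    have ha : a = 1 := by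
      have := hu a (by simp)
      rcases this with ⟨h1, h2⟩
      have h1' : a < 2 := h1
      have : a = 0 ∨ a = 1 := by omega
      rcases this with rfl | rfl
      · simp [myA] at h2
      · rfl
    subst ha
    have hu' : isEnvWord myA u := fun b hb => hu b (by simp [hb])
    have h := ih hu' (locAdd ℓ 1)
    refine ⟨?_, ?_⟩
    · rw [locAddW, h.1, (locAdd_coord ℓ 1 0).2 (by norm_num)]
    · calc (ℓ 1 : ℕ) ≤ (locAdd ℓ 1 1 : ℕ) := (locAdd_coord ℓ 1 1).1
        _ ≤ _ := h.2

lemma locAddW_sys {u : List ℕ} (hu : isSysWord myA u) (ℓ : L2) :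
    locAddW ℓ u 1 = ℓ 1 ∧ (ℓ 0 : ℕ) ≤ locAddW ℓ u 0 := by
  induction u generalizing ℓ with
  | nil => exact ⟨rfl, le_rfl⟩
  | cons a u ih =>
    have ha : a = 0 := by
      have := hu a (by simp)
      rcases this with ⟨h1, h2⟩
      have h1' : a < 2 := h1
      have : a = 0 ∨ a = 1 := by omega
      rcases this with rfl | rfl
      · rfl
      · simp [myA] at h2
    subst ha
    have hu' : isSysWord myA u := fun b hb => hu b (by simp [hb])
    have h := ih hu' (locAdd ℓ 0)
    refine ⟨?_, ?_⟩
    · rw [locAddW, h.1, (locAdd_coord ℓ 0 1).2 (by norm_num)]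
    · calc (ℓ 0 : ℕ) ≤ (locAdd ℓ 0 0 : ℕ) := (locAdd_coord ℓ 0 0).1
        _ ≤ _ := h.2

lemma env_nonreach {τ : Tr} (hτ : isEnvTrans Gm τ) (ℓ ℓ' : L2)
    (h : ¬(ℓ' 0 = ℓ 0 ∧ (ℓ 1 : ℕ) ≤ (ℓ' 1 : ℕ))) : τ ℓ ℓ' = 0 := by
  by_contra hne
  obtain ⟨u, hu, hw⟩ := (hτ ℓ ℓ').2 hne
  have := locAddW_env hu ℓ
  rw [← hw] at this
  exact h this

lemma sys_nonreach {τ : Tr} (hτ : isSysTrans Gm τ) (ℓ ℓ' : L2)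
    (h : ¬(ℓ' 1 = ℓ 1 ∧ (ℓ 0 : ℕ) ≤ (ℓ' 0 : ℕ))) : τ ℓ ℓ' = 0 := by
  by_contra hne
  obtain ⟨u, hu, hw⟩ := (hτ ℓ ℓ').2 hne
  have := locAddW_sys hu ℓ
  rw [← hw] at this
  exact h this

lemma sum_eq_pair {g : L2 → ℕ} (x y : L2) (hxy : x ≠ y)
    (h : ∀ ℓ, ℓ ≠ x → ℓ ≠ y → g ℓ = 0) : ∑ ℓ, g ℓ = g x + g y := by
  rw [← Finset.sum_pair hxy]
  symm
  refine Finset.sum_subset (Finset.subset_univ _) fun ℓ _ hℓ => ?_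
  simp only [Finset.mem_insert, Finset.mem_singleton] at hℓ
  push_neg at hℓ
  exact h ℓ hℓ.1 hℓ.2

lemma sum_eq_single {g : L2 → ℕ} (x : L2) (h : ∀ ℓ, ℓ ≠ x → g ℓ = 0) :
    ∑ ℓ, g ℓ = g x := by
  rw [← Finset.sum_singleton (f := g) x]
  symm
  refine Finset.sum_subset (Finset.subset_univ _) fun ℓ _ hℓ => ?_
  simp only [Finset.mem_singleton] at hℓ
  exact h ℓ hℓ

lemma inm_e_lC {τ : Tr} (hτ : isEnvTrans Gm τ) :
    (inm τ lC).2.1 = (τ l0 lC).2.1 + (τ lC lC).2.1 := by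
  rw [inm_e]
  refine sum_eq_pair l0 lC (by decide) fun ℓ h1 h2 => ?_
  have hkey : ∀ ℓ : L2, ℓ ≠ l0 → ℓ ≠ lC → ¬(lC 0 = ℓ 0 ∧ (ℓ 1 : ℕ) ≤ (lC 1 : ℕ)) := by decide
  rw [env_nonreach hτ ℓ lC (hkey ℓ h1 h2)]
  rfl

lemma inm_e_l0 {τ : Tr} (hτ : isEnvTrans Gm τ) :
    (inm τ l0).2.1 = (τ l0 l0).2.1 := by
  rw [inm_e]
  refine sum_eq_single l0 fun ℓ h1 => ?_
  have hkey : ∀ ℓ : L2, ℓ ≠ l0 → ¬(l0 0 = ℓ 0 ∧ (ℓ 1 : ℕ) ≤ (l0 1 : ℕ)) := by decide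
  rw [env_nonreach hτ ℓ l0 (hkey ℓ h1)]
  rfl

lemma inm_s_lA {τ : Tr} (hτ : isSysTrans Gm τ) :
    (inm τ lA).1 = (τ l0 lA).1 + (τ lA lA).1 := by
  rw [inm_fst]
  refine sum_eq_pair l0 lA (by decide) fun ℓ h1 h2 => ?_
  have hkey : ∀ ℓ : L2, ℓ ≠ l0 → ℓ ≠ lA → ¬(lA 1 = ℓ 1 ∧ (ℓ 0 : ℕ) ≤ (lA 0 : ℕ)) := by decide
  rw [sys_nonreach hτ ℓ lA (hkey ℓ h1 h2)]
  rfl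

lemma inm_s_l0 {τ : Tr} (hτ : isSysTrans Gm τ) :
    (inm τ l0).1 = (τ l0 l0).1 := by
  rw [inm_fst]
  refine sum_eq_single l0 fun ℓ h1 => ?_
  have hkey : ∀ ℓ : L2, ℓ ≠ l0 → ¬(l0 1 = ℓ 1 ∧ (ℓ 0 : ℕ) ≤ (l0 0 : ℕ)) := by decide
  rw [sys_nonreach hτ ℓ l0 (hkey ℓ h1)]
  rfl


/-! #### Explicit transitions -/

def sMv (p q : L2) (k : ℕ) : Tr := fun x y => if x = p ∧ y = q then (k, 0, 0) else 0

def eMv (p q : L2) (k : ℕ) : Tr := fun x y => if x = p ∧ y = q then (0, k, 0) else 0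

def id0 : Tr := fun _ _ => 0

lemma outm_sMv (p q : L2) (k : ℕ) (ℓ : L2) :
    outm (sMv p q k) ℓ = if ℓ = p then ((k, 0, 0) : Tok) else 0 := by
  rw [outm]
  by_cases h : ℓ = p
  · subst h
    rw [if_pos rfl, Finset.sum_eq_single q]
    · simp [sMv]
    · intro b _ hb; simp [sMv, hb]
    · intro hq; exact absurd (Finset.mem_univ q) hq
  · rw [if_neg h]
    exact Finset.sum_eq_zero fun b _ => by simp [sMv, h]

lemma inm_sMv (p q : L2) (k : ℕ) (ℓ : L2) :
    inm (sMv p q k) ℓ = if ℓ = q then ((k, 0, 0) : Tok) else 0 := by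
  rw [inm]
  by_cases h : ℓ = q
  · subst h
    rw [if_pos rfl, Finset.sum_eq_single p]
    · simp [sMv]
    · intro b _ hb; simp [sMv, hb]
    · intro hq; exact absurd (Finset.mem_univ p) hq
  · rw [if_neg h]
    exact Finset.sum_eq_zero fun b _ => by simp [sMv, h]

lemma outm_eMv (p q : L2) (k : ℕ) (ℓ : L2) :
    outm (eMv p q k) ℓ = if ℓ = p then ((0, k, 0) : Tok) else 0 := by
  rw [outm]
  by_cases h : ℓ = p
  · subst h
    rw [if_pos rfl, Finset.sum_eq_single q]
    · simp [eMv]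
    · intro b _ hb; simp [eMv, hb]
    · intro hq; exact absurd (Finset.mem_univ q) hq
  · rw [if_neg h]
    exact Finset.sum_eq_zero fun b _ => by simp [eMv, h]

lemma inm_eMv (p q : L2) (k : ℕ) (ℓ : L2) :
    inm (eMv p q k) ℓ = if ℓ = q then ((0, k, 0) : Tok) else 0 := by
  rw [inm]
  by_cases h : ℓ = q
  · subst h
    rw [if_pos rfl, Finset.sum_eq_single p]
    · simp [eMv]
    · intro b _ hb; simp [eMv, hb]
    · intro hq; exact absurd (Finset.mem_univ p) hq
  · rw [if_neg h]
    exact Finset.sum_eq_zero fun b _ => by simp [eMv, h]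

lemma apply_sMv_s (C : Cfg) (p q : L2) (k : ℕ) (hpq : p ≠ q) (ℓ : L2) :
    sAt (applyT (sMv p q k) C) ℓ =
      if ℓ = p then sAt C ℓ - k else if ℓ = q then sAt C ℓ + k else sAt C ℓ := by
  rw [applyT_fst, outm_sMv, inm_sMv]
  by_cases h1 : ℓ = p
  · subst h1; rw [if_pos rfl, if_pos rfl, if_neg hpq]; rfl
  · rw [if_neg h1, if_neg h1]
    by_cases h2 : ℓ = q
    · subst h2; rw [if_pos rfl, if_pos rfl]; rfl
    · rw [if_neg h2, if_neg h2]; rfl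

lemma apply_sMv_e (C : Cfg) (p q : L2) (k : ℕ) (ℓ : L2) :
    eAt (applyT (sMv p q k) C) ℓ = eAt C ℓ := by
  rw [applyT_e, outm_sMv, inm_sMv]
  split_ifs <;> rfl

lemma apply_eMv_e (C : Cfg) (p q : L2) (k : ℕ) (hpq : p ≠ q) (ℓ : L2) :
    eAt (applyT (eMv p q k) C) ℓ =
      if ℓ = p then eAt C ℓ - k else if ℓ = q then eAt C ℓ + k else eAt C ℓ := by
  rw [applyT_e, outm_eMv, inm_eMv]
  by_cases h1 : ℓ = p
  · subst h1; rw [if_pos rfl, if_pos rfl, if_neg hpq]; rfl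
  · rw [if_neg h1, if_neg h1]
    by_cases h2 : ℓ = q
    · subst h2; rw [if_pos rfl, if_pos rfl]; rfl
    · rw [if_neg h2, if_neg h2]; rfl

lemma apply_eMv_s (C : Cfg) (p q : L2) (k : ℕ) (ℓ : L2) :
    sAt (applyT (eMv p q k) C) ℓ = sAt C ℓ := by
  rw [applyT_fst, outm_eMv, inm_eMv]
  split_ifs <;> rfl

lemma applyT_id0 (C : Cfg) : applyT id0 C = C := by
  funext ℓ
  have h1 : outm id0 ℓ = 0 := by
    rw [outm]; exact Finset.sum_eq_zero fun b _ => rfl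
  have h2 : inm id0 ℓ = 0 := by
    rw [inm]; exact Finset.sum_eq_zero fun b _ => rfl
  rw [applyT, h1, h2]
  ext <;> simp

lemma isSys_id0 : isSysTrans Gm id0 := fun _ _ =>
  ⟨rfl, fun h => absurd rfl h⟩

lemma isEnv_id0 : isEnvTrans Gm id0 := fun _ _ =>
  ⟨rfl, fun h => absurd rfl h⟩

lemma applicable_id0 (C : Cfg) : applicable id0 C := by
  intro ℓ
  have h1 : outm id0 ℓ = 0 := by
    rw [outm]; exact Finset.sum_eq_zero fun b _ => rfl
  rw [h1]
  exact ⟨Nat.zero_le _, Nat.zero_le _, Nat.zero_le _⟩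

lemma isSys_sMv {p q : L2} {u : List ℕ} (hu : isSysWord Gm.Alph u) (hq : q = locAddW p u)
    (k : ℕ) : isSysTrans Gm (sMv p q k) := by
  intro ℓ ℓ'
  constructor
  · rw [sMv]; split <;> rfl
  · intro h
    rw [sMv] at h
    split at h
    · next hc => exact ⟨u, hu, by rw [hc.2, hc.1, hq]⟩
    · exact absurd rfl h

lemma isEnv_eMv {p q : L2} {u : List ℕ} (hu : isEnvWord Gm.Alph u) (hq : q = locAddW p u)
    (k : ℕ) : isEnvTrans Gm (eMv p q k) := by
  intro ℓ ℓ'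
  constructor
  · rw [eMv]; split <;> rfl
  · intro h
    rw [eMv] at h
    split at h
    · next hc => exact ⟨u, hu, by rw [hc.2, hc.1, hq]⟩
    · exact absurd rfl h

lemma sysWord0 : isSysWord Gm.Alph [0] := by
  intro a ha
  rw [List.mem_singleton] at ha
  subst ha
  exact ⟨by decide, rfl⟩

lemma envWord1 : isEnvWord Gm.Alph [1] := by
  intro a ha
  rw [List.mem_singleton] at ha
  subst ha
  exact ⟨by decide, rfl⟩

lemma isSys_sMv_0A (k : ℕ) : isSysTrans Gm (sMv l0 lA k) :=
  isSys_sMv (u := [0]) sysWord0 (by decide) k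

lemma isSys_sMv_AAA (k : ℕ) : isSysTrans Gm (sMv lA lAA k) :=
  isSys_sMv (u := [0]) sysWord0 (by decide) k

lemma isEnv_eMv_0C (k : ℕ) : isEnvTrans Gm (eMv l0 lC k) :=
  isEnv_eMv (u := [1]) envWord1 (by decide) k

lemma isEnv_eMv_CCC (k : ℕ) : isEnvTrans Gm (eMv lC lCC k) :=
  isEnv_eMv (u := [1]) envWord1 (by decide) k

lemma applicable_sMv (C : Cfg) (p q : L2) (k : ℕ) (h : k ≤ sAt C p) :
    applicable (sMv p q k) C := by
  intro ℓ
  rw [outm_sMv]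
  split_ifs with hp
  · subst hp; exact ⟨h, Nat.zero_le _, Nat.zero_le _⟩
  · exact ⟨Nat.zero_le _, Nat.zero_le _, Nat.zero_le _⟩

lemma applicable_eMv (C : Cfg) (p q : L2) (k : ℕ) (h : k ≤ eAt C p) :
    applicable (eMv p q k) C := by
  intro ℓ
  rw [outm_eMv]
  split_ifs with hp
  · subst hp; exact ⟨Nat.zero_le _, h, Nat.zero_le _⟩
  · exact ⟨Nat.zero_le _, Nat.zero_le _, Nat.zero_le _⟩

/-! #### The System strategy -/

def gMove (C : Cfg) : Option Tr :=
  if 1 ≤ eAt C lC then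
    if sAt C lA = 0 then (if 1 ≤ sAt C l0 then some (sMv l0 lA 1) else none)
    else some id0
  else
    if sAt C lA = 0 then some id0 else some (sMv lA lAA (sAt C lA))

lemma gMove_spec {C : Cfg} {τ : Tr} (h : gMove C = some τ) :
    isSysTrans Gm τ ∧ applicable τ C ∧ accept Gm (applyT τ C) := by
  rw [gMove] at h
  split_ifs at h with h1 h2 h3 h4
  · -- 1 ≤ E1, S1 = 0, 1 ≤ S0 : move one token l0 → lA
    obtain rfl : sMv l0 lA 1 = τ := by injection h
    refine ⟨isSys_sMv_0A 1, applicable_sMv C l0 lA 1 h3, ?_⟩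
    rw [accept_iff]
    right
    constructor
    · rw [apply_sMv_e]; exact h1
    · rw [apply_sMv_s C l0 lA 1 (by decide) lA,
        if_neg (by decide : lA ≠ l0), if_pos rfl]
      omega
  · -- 1 ≤ E1, S1 ≠ 0 : stay
    obtain rfl : id0 = τ := by injection h
    refine ⟨isSys_id0, applicable_id0 C, ?_⟩
    rw [applyT_id0, accept_iff]
    right
    exact ⟨h1, by omega⟩
  · -- E1 = 0, S1 = 0 : stay
    obtain rfl : id0 = τ := by injection h
    refine ⟨isSys_id0, applicable_id0 C, ?_⟩
    rw [applyT_id0, accept_iff]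
    left
    exact ⟨by omega, h4⟩
  · -- E1 = 0, S1 ≠ 0 : clear lA
    obtain rfl : sMv lA lAA (sAt C lA) = τ := by injection h
    refine ⟨isSys_sMv_AAA _, applicable_sMv C lA lAA _ le_rfl, ?_⟩
    rw [accept_iff]
    left
    constructor
    · rw [apply_sMv_e]; omega
    · rw [apply_sMv_s C lA lAA _ (by decide) lA, if_pos rfl]
      omega

/-! #### Invariants -/

def Jinv (C : Cfg) : Prop :=
  eAt C l0 ≤ sAt C l0 ∧
    ((eAt C lC = 0 ∧ sAt C lA = 0) ∨ (1 ≤ eAt C lC ∧ sAt C lA = 1))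

def Kinv (C : Cfg) : Prop :=
  (1 ≤ eAt C lC ∧ sAt C lA = 0 ∧ eAt C l0 + 1 ≤ sAt C l0) ∨
  (eAt C lC = 0 ∧ sAt C lA = 1 ∧ eAt C l0 ≤ sAt C l0)

lemma env_break {τ : Tr} (hτ : isEnvTrans Gm τ) {C : Cfg} (hJ : Jinv C)
    (happ : applicable τ C) (hna : ¬ accept Gm (applyT τ C)) : Kinv (applyT τ C) := by
  rw [accept_iff] at hna
  push_neg at hna
  have hs0 := env_apply_s hτ C l0
  have hsA := env_apply_s hτ C lA
  have heC := applyT_e τ C lC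
  have he0 := applyT_e τ C l0
  have hinC := inm_e_lC hτ
  have hin0 := inm_e_l0 hτ
  have houtC : (outm τ lC).2.1 ≤ eAt C lC := (happ lC).2.1
  have hout0 : (outm τ l0).2.1 ≤ eAt C l0 := (happ l0).2.1
  have hCC := single_le_out_e τ lC lC
  have h00 := pair_le_out_e τ
  have hmain := hJ.1
  rcases hJ.2 with ⟨hE1, hS1⟩ | ⟨hE1, hS1⟩
  · -- state A : environment must fill lC
    left
    have hS1' : sAt (applyT τ C) lA = 0 := by omega
    have hE1' : eAt (applyT τ C) lC ≠ 0 := fun h0 => (hna.1 h0) hS1'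
    exact ⟨by omega, hS1', by omega⟩
  · -- state B : environment must empty lC
    right
    have hS1' : sAt (applyT τ C) lA = 1 := by omega
    have hE1' : eAt (applyT τ C) lC = 0 := by
      by_contra hne
      have := hna.2 (by omega)
      omega
    exact ⟨hE1', hS1', by omega⟩

lemma sys_step {C : Cfg} (h : Jinv C ∨ Kinv C) :
    ∃ τ, gMove C = some τ ∧ Jinv (applyT τ C) := by
  rcases h with ⟨h0, ⟨hE1, hS1⟩ | ⟨hE1, hS1⟩⟩ | ⟨hE1, hS1, h0⟩ | ⟨hE1, hS1, h0⟩
  · refine ⟨id0, ?_, ?_⟩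
    · rw [gMove, if_neg (by omega), if_pos hS1]
    · rw [applyT_id0]; exact ⟨h0, Or.inl ⟨hE1, hS1⟩⟩
  · refine ⟨id0, ?_, ?_⟩
    · rw [gMove, if_pos hE1, if_neg (by omega)]
    · rw [applyT_id0]; exact ⟨h0, Or.inr ⟨hE1, hS1⟩⟩
  · refine ⟨sMv l0 lA 1, ?_, ?_⟩
    · rw [gMove, if_pos hE1, if_pos hS1, if_pos (by omega)]
    · constructor
      · rw [apply_sMv_e, apply_sMv_s C l0 lA 1 (by decide) l0, if_pos rfl]
        omega
      · right
        rw [apply_sMv_e, apply_sMv_s C l0 lA 1 (by decide) lA,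
          if_neg (by decide : lA ≠ l0), if_pos rfl]
        exact ⟨hE1, by omega⟩
  · refine ⟨sMv lA lAA (sAt C lA), ?_, ?_⟩
    · rw [gMove, if_neg (by omega), if_neg (by omega)]
    · constructor
      · rw [apply_sMv_e, apply_sMv_s C lA lAA _ (by decide) l0,
          if_neg (by decide : l0 ≠ lA), if_neg (by decide : l0 ≠ lAA)]
        omega
      · left
        rw [apply_sMv_e, apply_sMv_s C lA lAA _ (by decide) lA, if_pos rfl]
        exact ⟨by omega, by omega⟩



/-! #### Plays: bookkeeping lemmas -/

abbrev TrL := List Tr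

lemma confAt_snoc (C0 : Cfg) (ts : TrL) (τ : Tr) :
    confAt C0 (ts ++ [τ]) = applyT τ (confAt C0 ts) := by
  simp [confAt]

lemma validPlay_nil (C0 : Cfg) : validPlay Gm C0 [] := by
  intro i hi
  simp at hi

lemma validPlay_of_snoc {C0 : Cfg} {ts : TrL} {τ : Tr}
    (h : validPlay Gm C0 (ts ++ [τ])) : validPlay Gm C0 ts := by
  intro i hi
  have hi' : i < (ts ++ [τ]).length := by simp; omega
  have h' := h i hi'
  have hg : (ts ++ [τ]).get ⟨i, hi'⟩ = ts.get ⟨i, hi⟩ := by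
    simp only [List.get_eq_getElem]
    exact List.getElem_append_left hi
  have h1 : (ts ++ [τ]).take i = ts.take i :=
    List.take_append_of_le_length (by omega)
  have h2 : (ts ++ [τ]).take (i + 1) = ts.take (i + 1) :=
    List.take_append_of_le_length (by omega)
  rw [hg, h1, h2] at h'
  exact h'

lemma gCompatible_of_snoc {f : GStrat 2 2} {ts : TrL} {τ : Tr}
    (h : gCompatible f (ts ++ [τ])) : gCompatible f ts := by
  intro i hi hev
  have hi' : i < (ts ++ [τ]).length := by simp; omega
  have h' := h i hi' hev
  have hg : (ts ++ [τ]).get ⟨i, hi'⟩ = ts.get ⟨i, hi⟩ := by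
    simp only [List.get_eq_getElem]
    exact List.getElem_append_left hi
  have h1 : (ts ++ [τ]).take i = ts.take i :=
    List.take_append_of_le_length (by omega)
  rw [hg, h1] at h'
  exact h'

lemma validPlay_snoc_sys {C0 : Cfg} {ts : TrL} {τ : Tr}
    (h : validPlay Gm C0 ts) (hev : ts.length % 2 = 0)
    (h1 : applicable τ (confAt C0 ts)) (h2 : isSysTrans Gm τ)
    (h3 : accept Gm (applyT τ (confAt C0 ts))) : validPlay Gm C0 (ts ++ [τ]) := by
  intro i hi
  rw [List.length_append, List.length_singleton] at hi
  by_cases hlt : i < ts.length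
  · have h' := h i hlt
    have hg : (ts ++ [τ]).get ⟨i, by simp; omega⟩ = ts.get ⟨i, hlt⟩ := by
      simp only [List.get_eq_getElem]
      exact List.getElem_append_left hlt
    have ht1 : (ts ++ [τ]).take i = ts.take i :=
      List.take_append_of_le_length (by omega)
    have ht2 : (ts ++ [τ]).take (i + 1) = ts.take (i + 1) :=
      List.take_append_of_le_length (by omega)
    rw [hg, ht1, ht2]
    exact h'
  · have hieq : i = ts.length := by omega
    subst hieq
    have hg : (ts ++ [τ]).get ⟨ts.length, by simp⟩ = τ := by simp
    have ht1 : (ts ++ [τ]).take ts.length = ts := by simp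
    have ht2 : (ts ++ [τ]).take (ts.length + 1) = ts ++ [τ] := by simp
    rw [hg, ht1, ht2, confAt_snoc]
    exact ⟨h1, fun _ => ⟨h2, h3⟩, fun hodd => absurd hodd (by omega)⟩

lemma validPlay_snoc_env {C0 : Cfg} {ts : TrL} {τ : Tr}
    (h : validPlay Gm C0 ts) (hodd : ts.length % 2 = 1)
    (h1 : applicable τ (confAt C0 ts)) (h2 : isEnvTrans Gm τ)
    (h3 : ¬ accept Gm (applyT τ (confAt C0 ts))) : validPlay Gm C0 (ts ++ [τ]) := by
  intro i hi
  rw [List.length_append, List.length_singleton] at hi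
  by_cases hlt : i < ts.length
  · have h' := h i hlt
    have hg : (ts ++ [τ]).get ⟨i, by simp; omega⟩ = ts.get ⟨i, hlt⟩ := by
      simp only [List.get_eq_getElem]
      exact List.getElem_append_left hlt
    have ht1 : (ts ++ [τ]).take i = ts.take i :=
      List.take_append_of_le_length (by omega)
    have ht2 : (ts ++ [τ]).take (i + 1) = ts.take (i + 1) :=
      List.take_append_of_le_length (by omega)
    rw [hg, ht1, ht2]
    exact h'
  · have hieq : i = ts.length := by omega
    subst hieq
    have hg : (ts ++ [τ]).get ⟨ts.length, by simp⟩ = τ := by simp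
    have ht1 : (ts ++ [τ]).take ts.length = ts := by simp
    have ht2 : (ts ++ [τ]).take (ts.length + 1) = ts ++ [τ] := by simp
    rw [hg, ht1, ht2, confAt_snoc]
    exact ⟨h1, fun hev => absurd hev (by omega), fun _ => ⟨h2, h3⟩⟩

lemma gCompatible_nil (f : GStrat 2 2) : gCompatible f [] := by
  intro i hi
  simp at hi

lemma gCompatible_snoc {f : GStrat 2 2} {ts : TrL} {τ : Tr}
    (h : gCompatible f ts) (hcase : ts.length % 2 = 0 → f ts = some τ) :
    gCompatible f (ts ++ [τ]) := by
  intro i hi hev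
  rw [List.length_append, List.length_singleton] at hi
  by_cases hlt : i < ts.length
  · have h' := h i hlt hev
    have hg : (ts ++ [τ]).get ⟨i, by simp; omega⟩ = ts.get ⟨i, hlt⟩ := by
      simp only [List.get_eq_getElem]
      exact List.getElem_append_left hlt
    have ht1 : (ts ++ [τ]).take i = ts.take i :=
      List.take_append_of_le_length (by omega)
    rw [hg, ht1]
    exact h'
  · have hieq : i = ts.length := by omega
    subst hieq
    have hg : (ts ++ [τ]).get ⟨ts.length, by simp⟩ = τ := by simp
    have ht1 : (ts ++ [τ]).take ts.length = ts := by simp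
    rw [hg, ht1]
    exact hcase hev

lemma not_max_of_next {C0 : Cfg} {f : GStrat 2 2} {ts : TrL} {τ : Tr}
    (hv : validPlay Gm C0 (ts ++ [τ])) (hc : gCompatible f (ts ++ [τ])) :
    ¬ gMaximal Gm C0 f ts := by
  intro hm
  exact hm ⟨ts ++ [τ], List.prefix_append ts [τ], by simp, hv, hc⟩

lemma max_of_none {C0 : Cfg} {f : GStrat 2 2} {ts : TrL}
    (hev : ts.length % 2 = 0) (hn : f ts = none) : gMaximal Gm C0 f ts := by
  rintro ⟨ts', hpre, hne, _, hcomp⟩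
  have hlt : ts.length < ts'.length := by
    rcases lt_or_eq_of_le hpre.length_le with h | h
    · exact h
    · exact absurd (hpre.eq_of_length h) hne
  have htake : ts'.take ts.length = ts := (List.prefix_iff_eq_take.mp hpre).symm
  have := hcomp ts.length hlt hev
  rw [htake, hn] at this
  exact absurd this (by simp)

/-! #### Direction 1 : `ke ≤ ks` implies System wins -/

def fStrat (C0 : Cfg) : GStrat 2 2 := fun ts => gMove (confAt C0 ts)

lemma initConfig_l0 (k : Tok) : (initConfig k : Cfg) l0 = k :=
  Function.update_self _ _ _

lemma initConfig_ne (k : Tok) (ℓ : L2) (h : ℓ ≠ l0) : (initConfig k : Cfg) ℓ = 0 :=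
  Function.update_of_ne h _ _

lemma play_inv {ks ke : ℕ} (hks : ke ≤ ks) (ts : TrL)
    (hv : validPlay Gm (initConfig (ks, ke, 0)) ts)
    (hc : gCompatible (fStrat (initConfig (ks, ke, 0))) ts) :
    (ts.length % 2 = 0 → Jinv (confAt (initConfig (ks, ke, 0)) ts) ∨
        Kinv (confAt (initConfig (ks, ke, 0)) ts)) ∧
    (ts.length % 2 = 1 → Jinv (confAt (initConfig (ks, ke, 0)) ts)) := by
  set C0 : Cfg := initConfig (ks, ke, 0) with hC0
  induction ts using List.reverseRecOn with
  | nil =>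
    constructor
    · intro _
      left
      constructor
      · rw [hC0]
        show eAt (initConfig (ks, ke, 0)) l0 ≤ sAt (initConfig (ks, ke, 0)) l0
        rw [eAt, sAt, initConfig_l0]
        exact hks
      · left
        rw [hC0]
        constructor
        · show eAt (initConfig (ks, ke, 0)) lC = 0
          rw [eAt, initConfig_ne _ lC (by decide)]
          rfl
        · show sAt (initConfig (ks, ke, 0)) lA = 0
          rw [sAt, initConfig_ne _ lA (by decide)]
          rfl
    · intro h
      simp at h
  | append_singleton ts τ ih =>
    have hv' := validPlay_of_snoc hv
    have hc' := gCompatible_of_snoc hc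
    have ihs := ih hv' hc'
    rcases Nat.even_or_odd ts.length with hev | hodd
    · -- τ is a System move prescribed by the strategy
      have hev2 : ts.length % 2 = 0 := Nat.even_iff.mp hev
      have hJK := ihs.1 hev2
      obtain ⟨τ', hτ', hJ'⟩ := sys_step hJK
      have hfc := hc ts.length (by simp) hev2
      have hg : (ts ++ [τ]).get ⟨ts.length, by simp⟩ = τ := by simp
      have ht1 : (ts ++ [τ]).take ts.length = ts := by simp
      rw [hg, ht1] at hfc
      have heq : τ' = τ := by
        have : gMove (confAt C0 ts) = some τ := hfc
        rw [hτ'] at this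
        injection this
      subst heq
      constructor
      · intro h; rw [List.length_append, List.length_singleton] at h; omega
      · intro _
        rw [confAt_snoc]
        exact hJ'
    · -- τ is an Environment move
      have hodd2 : ts.length % 2 = 1 := Nat.odd_iff.mp hodd
      have hJ := ihs.2 hodd2
      have h' := hv ts.length (by simp)
      have hg : (ts ++ [τ]).get ⟨ts.length, by simp⟩ = τ := by simp
      have ht1 : (ts ++ [τ]).take ts.length = ts := by simp
      have ht2 : (ts ++ [τ]).take (ts.length + 1) = ts ++ [τ] := by simp
      rw [hg, ht1, ht2] at h'
      have henv := (h'.2.2 hodd2).1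
      have hna := (h'.2.2 hodd2).2
      have happ := h'.1
      rw [confAt_snoc] at hna ⊢
      constructor
      · intro _
        right
        exact env_break henv hJ happ hna
      · intro h; rw [List.length_append, List.length_singleton] at h; omega

lemma dir1_winning {ks ke : ℕ} (hks : ke ≤ ks) (ts : TrL)
    (hval : validPlay Gm (initConfig (ks, ke, 0)) ts)
    (hcomp : gCompatible (fStrat (initConfig (ks, ke, 0))) ts)
    (hmax : gMaximal Gm (initConfig (ks, ke, 0)) (fStrat (initConfig (ks, ke, 0))) ts) :
    accept Gm (confAt (initConfig (ks, ke, 0)) ts) := by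
  set C0 : Cfg := initConfig (ks, ke, 0) with hC0
  rcases Nat.even_or_odd ts.length with hev | hodd
  · -- even length: not maximal, contradiction
    exfalso
    have hev2 : ts.length % 2 = 0 := Nat.even_iff.mp hev
    have hJK := (play_inv hks ts hval hcomp).1 hev2
    obtain ⟨τ, hτ, _⟩ := sys_step hJK
    obtain ⟨hsys, happ, hacc⟩ := gMove_spec hτ
    have hfeq : fStrat C0 ts = some τ := hτ
    have hv2 : validPlay Gm C0 (ts ++ [τ]) :=
      validPlay_snoc_sys hval hev2 happ hsys hacc
    have hc2 : gCompatible (fStrat C0) (ts ++ [τ]) :=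
      gCompatible_snoc hcomp fun _ => hfeq
    exact not_max_of_next hv2 hc2 hmax
  · -- odd length: the play itself ends in an accepting configuration
    have hodd2 : ts.length % 2 = 1 := Nat.odd_iff.mp hodd
    have hlast : ts.length - 1 < ts.length := by omega
    have h' := hval (ts.length - 1) hlast
    have hacc := (h'.2.1 (by omega)).2
    have hteq : ts.take (ts.length - 1 + 1) = ts := by
      have he : ts.length - 1 + 1 = ts.length := by omega
      rw [he, List.take_length]
    rw [hteq] at hacc
    exact hacc

lemma dir1 {ks ke : ℕ} (hks : ke ≤ ks) : winningConf Gm (initConfig (ks, ke, 0)) := by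
  set C0 : Cfg := initConfig (ks, ke, 0) with hC0
  refine ⟨fStrat C0, ⟨?_, ?_⟩, fun ts hv hc hm => dir1_winning hks ts hv hc hm⟩
  · -- f [] is defined
    show (gMove (confAt C0 [])).isSome
    have hcc : confAt C0 [] = C0 := rfl
    rw [hcc]
    have h1 : eAt C0 lC = 0 := by
      rw [hC0, eAt, initConfig_ne _ lC (by decide)]
      rfl
    have h2 : sAt C0 lA = 0 := by
      rw [hC0, sAt, initConfig_ne _ lA (by decide)]
      rfl
    rw [gMove, if_neg (by omega), if_pos h2]
    rfl
  · -- properness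
    intro ts τ _ hf
    exact gMove_spec hf


/-! #### Direction 2 : if System wins then `ke ≤ ks` -/

def IC (ks ke : ℕ) : Cfg := initConfig (ks, ke, 0)

lemma sys_response0 {τ : Tr} (hτ : isSysTrans Gm τ) {C : Cfg} (happ : applicable τ C) :
    sAt (applyT τ C) l0 ≤ sAt C l0 := by
  have h1 := applyT_fst τ C l0
  have h2 := inm_s_l0 hτ
  have h3 := single_le_out_s τ l0 l0
  have h4 : (outm τ l0).1 ≤ sAt C l0 := (happ l0).1
  omega

lemma sys_response {τ : Tr} (hτ : isSysTrans Gm τ) {C : Cfg} (happ : applicable τ C)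
    (hE1 : 1 ≤ eAt C lC) (hS1 : sAt C lA = 0) (hacc : accept Gm (applyT τ C)) :
    1 ≤ sAt (applyT τ C) lA ∧ sAt (applyT τ C) l0 + 1 ≤ sAt C l0 := by
  have hEpres := sys_apply_e hτ C lC
  have hS1' : 1 ≤ sAt (applyT τ C) lA := by
    rcases (accept_iff _).mp hacc with ⟨h1, _⟩ | ⟨_, h2⟩
    · omega
    · exact h2
  have hA := applyT_fst τ C lA
  have hA2 := inm_s_lA hτ
  have hA3 := single_le_out_s τ lA lA
  have hA4 : (outm τ lA).1 ≤ sAt C lA := (happ lA).1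
  have h0 := applyT_fst τ C l0
  have h02 := inm_s_l0 hτ
  have h03 := pair_le_out_s τ
  have h04 : (outm τ l0).1 ≤ sAt C l0 := (happ l0).1
  exact ⟨hS1', by omega⟩

def Rinv (ks ke i : ℕ) (C : Cfg) : Prop :=
  eAt C lC = 0 ∧ sAt C lA = 0 ∧ eAt C l0 + i = ke ∧ sAt C l0 + i ≤ ks

/-- One environment challenge: from an `Rinv`-like position with an environment
token left on `l0`, the environment plays `eMv l0 lC 1`; the System answer must
consume a fresh token from `l0`. -/
lemma challenge {ks ke : ℕ} {f : GStrat 2 2}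
    (hprop : properGStrat Gm (IC ks ke) f)
    (hwin : ∀ ts, validPlay Gm (IC ks ke) ts → gCompatible f ts →
      gMaximal Gm (IC ks ke) f ts → accept Gm (confAt (IC ks ke) ts))
    {ts : TrL} (hval : validPlay Gm (IC ks ke) ts)
    (hcomp : gCompatible f ts) (hodd : ts.length % 2 = 1)
    (hE1 : eAt (confAt (IC ks ke) ts) lC = 0)
    (hS1 : sAt (confAt (IC ks ke) ts) lA = 0)
    (hE0 : 1 ≤ eAt (confAt (IC ks ke) ts) l0) :
    ∃ τ : Tr, validPlay Gm (IC ks ke) (ts ++ [eMv l0 lC 1] ++ [τ]) ∧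
      gCompatible f (ts ++ [eMv l0 lC 1] ++ [τ]) ∧
      (ts ++ [eMv l0 lC 1] ++ [τ]).length % 2 = 1 ∧
      (eAt (confAt (IC ks ke) (ts ++ [eMv l0 lC 1] ++ [τ])) lC = 1 ∧
       1 ≤ sAt (confAt (IC ks ke) (ts ++ [eMv l0 lC 1] ++ [τ])) lA ∧
       eAt (confAt (IC ks ke) (ts ++ [eMv l0 lC 1] ++ [τ])) l0 + 1 =
         eAt (confAt (IC ks ke) ts) l0 ∧
       sAt (confAt (IC ks ke) (ts ++ [eMv l0 lC 1] ++ [τ])) l0 + 1 ≤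
         sAt (confAt (IC ks ke) ts) l0) := by
  set C : Cfg := confAt (IC ks ke) ts with hC
  set C2 : Cfg := applyT (eMv l0 lC 1) C with hC2
  have app1 : applicable (eMv l0 lC 1) C := applicable_eMv C l0 lC 1 hE0
  have hC2eC : eAt C2 lC = eAt C lC + 1 := by
    rw [hC2, apply_eMv_e C l0 lC 1 (by decide) lC, if_neg (by decide : lC ≠ l0), if_pos rfl]
  have hC2e0 : eAt C2 l0 = eAt C l0 - 1 := by
    rw [hC2, apply_eMv_e C l0 lC 1 (by decide) l0, if_pos rfl]
  have hC2sA : sAt C2 lA = sAt C lA := by rw [hC2, apply_eMv_s]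
  have hC2s0 : sAt C2 l0 = sAt C l0 := by rw [hC2, apply_eMv_s]
  have hna2 : ¬ accept Gm C2 := by
    rw [accept_iff]
    rintro (⟨h1, _⟩ | ⟨_, h2⟩) <;> omega
  have hval2 : validPlay Gm (IC ks ke) (ts ++ [eMv l0 lC 1]) :=
    validPlay_snoc_env hval hodd app1 (isEnv_eMv_0C 1) hna2
  have hcomp2 : gCompatible f (ts ++ [eMv l0 lC 1]) :=
    gCompatible_snoc hcomp fun h => absurd h (by omega)
  have hlen2 : (ts ++ [eMv l0 lC 1]).length % 2 = 0 := by
    rw [List.length_append, List.length_singleton]; omega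
  have hconf2 : confAt (IC ks ke) (ts ++ [eMv l0 lC 1]) = C2 := confAt_snoc _ ts _
  cases hf : f (ts ++ [eMv l0 lC 1]) with
  | none =>
    exfalso
    have hmax := max_of_none (C0 := IC ks ke) hlen2 hf
    have := hwin _ hval2 hcomp2 hmax
    rw [hconf2] at this
    exact hna2 this
  | some τ =>
    obtain ⟨hsys, happ3, hacc3⟩ := hprop.2 _ τ hval2 hf
    rw [hconf2] at happ3 hacc3
    have hresp := sys_response hsys happ3 (by omega) (by omega) hacc3
    have hconf3 : confAt (IC ks ke) (ts ++ [eMv l0 lC 1] ++ [τ]) = applyT τ C2 := by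
      rw [confAt_snoc, hconf2]
    refine ⟨τ, ?_, ?_, ?_, ?_, ?_, ?_, ?_⟩
    · exact validPlay_snoc_sys hval2 hlen2 (hconf2 ▸ happ3) hsys (hconf2 ▸ hacc3)
    · exact gCompatible_snoc hcomp2 fun _ => hf
    · simp only [List.length_append, List.length_singleton]; omega
    · rw [hconf3, sys_apply_e hsys]; omega
    · rw [hconf3]; exact hresp.1
    · rw [hconf3, sys_apply_e hsys]; omega
    · rw [hconf3]; omega

lemma reachR {ks ke : ℕ} {f : GStrat 2 2}
    (hprop : properGStrat Gm (IC ks ke) f)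
    (hwin : ∀ ts, validPlay Gm (IC ks ke) ts → gCompatible f ts →
      gMaximal Gm (IC ks ke) f ts → accept Gm (confAt (IC ks ke) ts)) :
    ∀ i, i ≤ ks → i ≤ ke → ∃ ts : TrL, validPlay Gm (IC ks ke) ts ∧
      gCompatible f ts ∧ ts.length % 2 = 1 ∧
      Rinv ks ke i (confAt (IC ks ke) ts) := by
  intro i
  induction i with
  | zero =>
    intro _ _
    obtain ⟨τ0, hτ0⟩ := Option.isSome_iff_exists.mp hprop.1
    obtain ⟨hsys, happ, hacc⟩ := hprop.2 [] τ0 (validPlay_nil (IC ks ke)) hτ0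
    have hval : validPlay Gm (IC ks ke) ([] ++ [τ0]) :=
      validPlay_snoc_sys (validPlay_nil (IC ks ke)) (by simp) happ hsys hacc
    have hcomp : gCompatible f ([] ++ [τ0]) :=
      gCompatible_snoc (gCompatible_nil f) fun _ => hτ0
    refine ⟨[τ0], hval, hcomp, by simp, ?_⟩
    have hconf : confAt (IC ks ke) [τ0] = applyT τ0 (IC ks ke) := rfl
    have he0C : eAt (IC ks ke) lC = 0 := by
      show eAt (initConfig (ks, ke, 0)) lC = 0
      rw [eAt, initConfig_ne _ lC (by decide)]; rfl
    have he00 : eAt (IC ks ke) l0 = ke := by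
      show eAt (initConfig (ks, ke, 0)) l0 = ke
      rw [eAt, initConfig_l0]
    have hs00 : sAt (IC ks ke) l0 = ks := by
      show sAt (initConfig (ks, ke, 0)) l0 = ks
      rw [sAt, initConfig_l0]
    have hacc' : accept Gm (confAt (IC ks ke) [τ0]) := hacc
    have h1 : eAt (confAt (IC ks ke) [τ0]) lC = 0 := by
      rw [hconf, sys_apply_e hsys]; omega
    have h2 : sAt (confAt (IC ks ke) [τ0]) lA = 0 := by
      rcases (accept_iff _).mp hacc' with ⟨_, hx⟩ | ⟨hx, _⟩
      · exact hx
      · omega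
    have h3 : eAt (confAt (IC ks ke) [τ0]) l0 + 0 = ke := by
      rw [hconf, sys_apply_e hsys]; omega
    have h4 : sAt (confAt (IC ks ke) [τ0]) l0 + 0 ≤ ks := by
      have h5 : sAt (applyT τ0 (IC ks ke)) l0 ≤ sAt (IC ks ke) l0 :=
        sys_response0 hsys happ
      rw [hconf]
      omega
    exact ⟨h1, h2, h3, h4⟩
  | succ i ih =>
    intro hks hke
    obtain ⟨ts, hval, hcomp, hodd, hR⟩ := ih (by omega) (by omega)
    obtain ⟨hE1, hS1, hE0i, hS0i⟩ := hR
    obtain ⟨τ, hval3, hcomp3, hodd3, hE1', hSA', hE0', hS0'⟩ :=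
      challenge hprop hwin hval hcomp hodd hE1 hS1 (by omega)
    set ts3 : TrL := ts ++ [eMv l0 lC 1] ++ [τ] with hts3
    set C3 : Cfg := confAt (IC ks ke) ts3 with hC3
    set C4 : Cfg := applyT (eMv lC lCC 1) C3 with hC4
    have app4 : applicable (eMv lC lCC 1) C3 := applicable_eMv C3 lC lCC 1 (by omega)
    have hC4eC : eAt C4 lC = eAt C3 lC - 1 := by
      rw [hC4, apply_eMv_e C3 lC lCC 1 (by decide) lC, if_pos rfl]
    have hC4e0 : eAt C4 l0 = eAt C3 l0 := by
      rw [hC4, apply_eMv_e C3 lC lCC 1 (by decide) l0,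
        if_neg (by decide : l0 ≠ lC), if_neg (by decide : l0 ≠ lCC)]
    have hC4sA : sAt C4 lA = sAt C3 lA := by rw [hC4, apply_eMv_s]
    have hC4s0 : sAt C4 l0 = sAt C3 l0 := by rw [hC4, apply_eMv_s]
    have hna4 : ¬ accept Gm C4 := by
      rw [accept_iff]
      rintro (⟨_, h2⟩ | ⟨h1, _⟩) <;> omega
    have hval4 : validPlay Gm (IC ks ke) (ts3 ++ [eMv lC lCC 1]) :=
      validPlay_snoc_env hval3 hodd3 app4 (isEnv_eMv_CCC 1) hna4
    have hcomp4 : gCompatible f (ts3 ++ [eMv lC lCC 1]) :=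
      gCompatible_snoc hcomp3 fun h => absurd h (by omega)
    have hlen4 : (ts3 ++ [eMv lC lCC 1]).length % 2 = 0 := by
      rw [List.length_append, List.length_singleton]; omega
    have hconf4 : confAt (IC ks ke) (ts3 ++ [eMv lC lCC 1]) = C4 := confAt_snoc _ ts3 _
    cases hf : f (ts3 ++ [eMv lC lCC 1]) with
    | none =>
      exfalso
      have hmax := max_of_none (C0 := IC ks ke) hlen4 hf
      have := hwin _ hval4 hcomp4 hmax
      rw [hconf4] at this
      exact hna4 this
    | some τ' =>
      obtain ⟨hsys', happ5, hacc5⟩ := hprop.2 _ τ' hval4 hf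
      rw [hconf4] at happ5 hacc5
      have hconf5 : confAt (IC ks ke) (ts3 ++ [eMv lC lCC 1] ++ [τ']) = applyT τ' C4 := by
        rw [confAt_snoc, hconf4]
      refine ⟨ts3 ++ [eMv lC lCC 1] ++ [τ'], ?_, ?_, ?_, ?_⟩
      · exact validPlay_snoc_sys hval4 hlen4 (hconf4 ▸ happ5) hsys' (hconf4 ▸ hacc5)
      · exact gCompatible_snoc hcomp4 fun _ => hf
      · simp only [List.length_append, List.length_singleton]
        omega
      · have h5eC : eAt (applyT τ' C4) lC = 0 := by rw [sys_apply_e hsys']; omega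
        have h5sA : sAt (applyT τ' C4) lA = 0 := by
          rcases (accept_iff _).mp hacc5 with ⟨_, hx⟩ | ⟨hx, _⟩
          · exact hx
          · omega
        have h5e0 : eAt (applyT τ' C4) l0 = eAt C4 l0 := by rw [sys_apply_e hsys']
        have h5s0 := sys_response0 hsys' happ5
        rw [hconf5]
        exact ⟨h5eC, h5sA, by omega, by omega⟩

lemma dir2 {ks ke : ℕ} (hw : winningConf Gm (initConfig (ks, ke, 0))) : ke ≤ ks := by
  by_contra hlt
  push_neg at hlt
  obtain ⟨f, hprop, hwin⟩ := hw
  have hprop' : properGStrat Gm (IC ks ke) f := hprop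
  have hwin' : ∀ ts, validPlay Gm (IC ks ke) ts → gCompatible f ts →
      gMaximal Gm (IC ks ke) f ts → accept Gm (confAt (IC ks ke) ts) :=
    fun ts hv hc hm => hwin ts hv hc hm
  obtain ⟨ts, hval, hcomp, hodd, hR⟩ := reachR hprop' hwin' ks le_rfl (by omega)
  obtain ⟨hE1, hS1, hE0, hS0⟩ := hR
  obtain ⟨τ, _, _, _, _, _, _, hS0'⟩ :=
    challenge hprop' hwin' hval hcomp hodd hE1 hS1 (by omega)
  omega

/-! #### Assembly -/

lemma winG_iff (ks ke : ℕ) : ((ks, ke, 0) : Tok) ∈ WinG Gm ↔ ke ≤ ks := by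
  constructor
  · intro h
    exact dir2 h
  · intro h
    exact dir1 h


end NC


/-- There is a parameterized vector game `G` such that
`(k_s, k_e, 0) ∈ Win(G)` iff `k_s ≥ k_e`; consequently `Win(G)` has no cutoff with
respect to `(ℕ, ℕ, {0})`. -/
theorem no_cutoff_NN0 :
    ∃ G : PVG,
      (∀ ks ke : ℕ, ((ks, ke, 0) : Tok) ∈ WinG G ↔ ke ≤ ks) ∧
      ¬ ∃ k0 : Tok, IsCutoff Set.univ Set.univ {0} (WinG G) k0 := by
  refine ⟨NC.Gm, NC.winG_iff, ?_⟩
  rintro ⟨k0, _, _, h3, hd⟩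
  have hz : k0.2.2 = 0 := h3
  rcases hd with hall | hnone
  · have h := hall (k0.1, k0.1 + k0.2.1 + 1, 0) (Set.mem_univ _) (Set.mem_univ _) rfl
      le_rfl (by show k0.2.1 ≤ k0.1 + k0.2.1 + 1; omega) (by show k0.2.2 ≤ 0; omega)
    rw [NC.winG_iff] at h
    omega
  · have h := hnone (k0.1 + k0.2.1, k0.2.1, 0) (Set.mem_univ _) (Set.mem_univ _) rfl
      (by show k0.1 ≤ k0.1 + k0.2.1; omega) le_rfl (by show k0.2.2 ≤ 0; omega)
    exact h ((NC.winG_iff _ _).mpr (le_add_self))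

end PSyn
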